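/- Fix a prime p, σ, α > 0, N = (∫_{ℤ_p}e^{−σ|x|_p^α}dx)^{−1}, and Q₀(|x|_p) = N·Ω(|x|_p)e^{−σ|x|_p^α}. Assume the heat kernel lower bound Z(ξ;σ,α) ≥ C₁σ/(|ξ|_p+σ^{1/α})^{1+α} for all ξ, with some constant C₁ > 0. Suppose r₀ is a negative integer with p^{1−r₀} ≤ σ^{1/α}, I₀ ∈ G_M satisfies f(I₀) ≥ 1, and N·C₁·σ^{−1/α}·2^{−(1+α)} > μ_max, where μ_max is the maximum of the real parts of the eigenvalues of the matrix W⁰. Then Hypothesis B holds: Q̂₀(p^{1−r₀})·f(I₀) > μ_max. (In particular this holds whenever σ < σ_max := (N·C₁/(2^{1+α}·μ_max))^α.) -/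

import Mathlib

open MeasureTheory Filter
open scoped Real Topology ENNReal NNReal

namespace PadicES

variable (p : ℕ) [Fact p.Prime]

noncomputable instance : MeasurableSpace ℚ_[p] := borel _
instance : BorelSpace ℚ_[p] := ⟨rfl⟩
noncomputable instance : DecidableEq ℚ_[p] := Classical.decEq _

/-- The closed unit ball `ℤ_p` viewed as a subset of `ℚ_p`. -/
def unitBall : Set ℚ_[p] := {x : ℚ_[p] | ‖x‖ ≤ 1}

lemma isCompact_unitBall : IsCompact (unitBall p) := by
  have : unitBall p = Metric.closedBall (0 : ℚ_[p]) 1 := by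
    ext x; simp [unitBall, Metric.mem_closedBall, dist_eq_norm]
  rw [this]; exact isCompact_closedBall _ _

lemma interior_unitBall_nonempty : (interior (unitBall p)).Nonempty := by
  have : unitBall p = Metric.closedBall (0 : ℚ_[p]) 1 := by
    ext x; simp [unitBall, Metric.mem_closedBall, dist_eq_norm]
  rw [this, (IsUltrametricDist.isOpen_closedBall (0 : ℚ_[p]) one_ne_zero).interior_eq]
  exact ⟨0, by simp⟩

/-- The Haar measure `dx` on `(ℚ_p, +)`, normalized so that `ℤ_p` has measure `1`. -/
noncomputable def haar : Measure ℚ_[p] :=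
  Measure.addHaarMeasure ⟨⟨unitBall p, isCompact_unitBall p⟩, interior_unitBall_nonempty p⟩

lemma norm_scaled_le_one (y : ℚ_[p]) (h : ¬ ‖y‖ ≤ 1) :
    ‖(p : ℚ_[p]) ^ ((-y.valuation).toNat) * y‖ ≤ 1 := by
  have hy : y ≠ 0 := by rintro rfl; simp at h
  have hv : y.valuation < 0 := by
    by_contra hv
    push_neg at hv
    exact h ((Padic.norm_le_one_iff_val_nonneg (p := p) y).mpr hv)
  have hp0 : (0 : ℝ) < (p : ℝ) := by
    exact_mod_cast (Fact.out : p.Prime).pos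
  rw [norm_mul, norm_pow, Padic.norm_p, Padic.norm_eq_zpow_neg_valuation hy]
  rw [inv_pow, ← zpow_natCast, Int.toNat_of_nonneg (by omega)]
  rw [← zpow_neg, ← zpow_add₀ (ne_of_gt hp0)]
  simp

/-- The `p`-adic fractional part `{y}_p`, as a rational number. -/
noncomputable def fract (y : ℚ_[p]) : ℚ :=
  if h : ‖y‖ ≤ 1 then 0
  else
    ((PadicInt.toZModPow ((-y.valuation).toNat)
        (⟨(p : ℚ_[p]) ^ ((-y.valuation).toNat) * y, norm_scaled_le_one p y h⟩ :
          ℤ_[p])).val : ℚ) / (p : ℚ) ^ ((-y.valuation).toNat)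

/-- The standard additive character `χ_p(y) = exp(2 π i {y}_p)` of `(ℚ_p,+)`. -/
noncomputable def stdChar (y : ℚ_[p]) : ℂ :=
  Complex.exp (2 * (Real.pi : ℂ) * Complex.I * (fract p y : ℂ))

/-- The ball `a + p^R ℤ_p` of radius `p^{-R}` centered at `a`. -/
def ballSet (R : ℤ) (a : ℚ_[p]) : Set ℚ_[p] := {x : ℚ_[p] | ‖x - a‖ ≤ (p : ℝ) ^ (-R)}

/-- `Ω(p^R |x - a|_p)`: the indicator function of the ball `a + p^R ℤ_p` (complex valued). -/
noncomputable def ballInd (R : ℤ) (a x : ℚ_[p]) : ℂ := if ‖x - a‖ ≤ (p : ℝ) ^ (-R) then 1 else 0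

/-- `Ω(p^R |x - a|_p)`: the indicator function of the ball `a + p^R ℤ_p` (real valued). -/
noncomputable def ballIndR (R : ℤ) (a x : ℚ_[p]) : ℝ := if ‖x - a‖ ≤ (p : ℝ) ^ (-R) then 1 else 0

/-- The Kozyrev wavelet
`Ψ_{rnj}(x) = p^{-r/2} χ_p(p^{-1} j (p^r x - n)) Ω(|p^r x - n|_p)`. -/
noncomputable def wavelet (r : ℤ) (n : ℚ_[p]) (j : ℕ) (x : ℚ_[p]) : ℂ :=
  (((p : ℝ) ^ (-(r : ℝ) / 2) : ℝ) : ℂ) *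
    stdChar p ((p : ℚ_[p])⁻¹ * (j : ℚ_[p]) * ((p : ℚ_[p]) ^ r * x - n)) *
    ballInd p 0 0 ((p : ℚ_[p]) ^ r * x - n)

/-- The Fourier transform `ĝ(ξ) = ∫ χ_p(ξ x) g(x) dx` of a complex-valued function. -/
noncomputable def fourierT (g : ℚ_[p] → ℂ) (ξ : ℚ_[p]) : ℂ :=
  ∫ x, stdChar p (ξ * x) * g x ∂(haar p)

/-- A function on `ℚ_p` is radial if it only depends on `|x|_p`. -/
def IsRadial (g : ℚ_[p] → ℝ) : Prop := ∀ x y : ℚ_[p], ‖x‖ = ‖y‖ → g x = g y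

/-- Convolution `(g ∗ φ)(x) = ∫ g(x - y) φ(y) dy` of a real kernel with a complex function. -/
noncomputable def conv (g : ℚ_[p] → ℝ) (φ : ℚ_[p] → ℂ) (x : ℚ_[p]) : ℂ :=
  ∫ y, (g (x - y) : ℂ) * φ y ∂(haar p)

/-- Real-valued convolution. -/
noncomputable def convR (g φ : ℚ_[p] → ℝ) (x : ℚ_[p]) : ℝ :=
  ∫ y, g (x - y) * φ y ∂(haar p)

/-- The fitness function `f(x) = Σ_{I ∈ G_M} f(I) Ω(p^M |x - I|_p)`. -/
noncomputable def fitness (fc : ℚ_[p] → ℝ) (M : ℕ) (G : Finset ℚ_[p]) (x : ℚ_[p]) : ℝ :=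
  ∑ I ∈ G, fc I * ballIndR p M I x

/-- The matrix `W⁰` of the operator `W₀ φ = Q₀ ∗ (f φ)` on the span of the
indicator functions of the balls `I + p^M ℤ_p`, `I ∈ G_M`. -/
noncomputable def Wmat (Q₀ fc : ℚ_[p] → ℝ) (M : ℕ) (G : Finset ℚ_[p]) :
    Matrix {I : ℚ_[p] // I ∈ G} {I : ℚ_[p] // I ∈ G} ℝ :=
  fun I J =>
    if I = J then fc I.1 * ∫ z in ballSet p M 0, Q₀ z ∂(haar p)
    else fc I.1 * Q₀ (J.1 - I.1) * (p : ℝ) ^ (-(M : ℤ))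


/-- The operator `W₀ φ = Q₀ ∗ (f φ)` (complex-valued version). -/
noncomputable def Wop (Q₀ fc : ℚ_[p] → ℝ) (M : ℕ) (G : Finset ℚ_[p]) (φ : ℚ_[p] → ℂ)
    (x : ℚ_[p]) : ℂ :=
  conv p Q₀ (fun y => ((fitness p fc M G y : ℝ) : ℂ) * φ y) x

/-- The operator `W₀ φ = Q₀ ∗ (f φ)` (real-valued version). -/
noncomputable def WopR (Q₀ fc : ℚ_[p] → ℝ) (M : ℕ) (G : Finset ℚ_[p]) (φ : ℚ_[p] → ℝ)
    (x : ℚ_[p]) : ℝ :=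
  convR p Q₀ (fun y => fitness p fc M G y * φ y) x

/-- The `p`-adic heat kernel `Z(ξ; σ, α) = ∫ χ_p(ξ x) e^{-σ |x|_p^α} dx`. -/
noncomputable def heatK (σ α : ℝ) (ξ : ℚ_[p]) : ℂ :=
  ∫ x, stdChar p (ξ * x) * ((Real.exp (-σ * ‖x‖ ^ α) : ℝ) : ℂ) ∂(haar p)


section AuxLemmas

variable (p : ℕ) [Fact p.Prime]

private lemma p_gt_oneR : (1 : ℝ) < p := by exact_mod_cast (Fact.out : p.Prime).one_lt

private lemma p_posR : (0 : ℝ) < p := lt_trans one_pos (p_gt_oneR p)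

private lemma p_ne_zeroQp : (p : ℚ_[p]) ≠ 0 := by
  exact_mod_cast Nat.cast_ne_zero.mpr (Fact.out : p.Prime).ne_zero

lemma val_of_norm {y : ℚ_[p]} (hy : y ≠ 0) {n : ℤ} (h : ‖y‖ = (p : ℝ) ^ n) :
    y.valuation = -n := by
  have h2 := Padic.norm_eq_zpow_neg_valuation hy
  rw [h] at h2
  have h3 := zpow_right_injective₀ (p_posR p) (ne_of_gt (p_gt_oneR p)) h2
  omega

lemma fract_eq (y : ℚ_[p]) (h : ¬ ‖y‖ ≤ 1) (n : ℕ) (hn : (n : ℤ) = -y.valuation)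
    (z : ℤ_[p]) (hz : (z : ℚ_[p]) = (p : ℚ_[p]) ^ n * y) :
    fract p y = ((PadicInt.toZModPow n z).val : ℚ) / p ^ n := by
  have hnn : (-y.valuation).toNat = n := by omega
  have hsub : (⟨(p : ℚ_[p]) ^ ((-y.valuation).toNat) * y, norm_scaled_le_one p y h⟩ : ℤ_[p]) = z := by
    apply Subtype.ext
    show (p : ℚ_[p]) ^ ((-y.valuation).toNat) * y = (z : ℚ_[p])
    rw [hnn, hz]
  rw [fract, dif_neg h, hsub, hnn]

lemma norm_pinv : ‖((p : ℚ_[p]))⁻¹‖ = p := by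
  rw [norm_inv, Padic.norm_p, inv_inv]

lemma pinv_not_norm_le_one : ¬ ‖((p : ℚ_[p]))⁻¹‖ ≤ 1 := by
  rw [norm_pinv]
  exact not_le.mpr (p_gt_oneR p)

lemma fract_pinv : fract p ((p : ℚ_[p]))⁻¹ = 1 / p := by
  have hne : ((p : ℚ_[p]))⁻¹ ≠ 0 := inv_ne_zero (p_ne_zeroQp p)
  have hval : (((p : ℚ_[p]))⁻¹).valuation = -1 := by
    apply val_of_norm p hne (n := 1)
    rw [norm_pinv, zpow_one]
  haveI : Fact (1 < p ^ (1 : ℕ)) := ⟨by simpa using (Fact.out : p.Prime).one_lt⟩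
  rw [fract_eq p _ (pinv_not_norm_le_one p) 1 (by rw [hval]; simp) 1
      (by push_cast; rw [pow_one, mul_inv_cancel₀ (p_ne_zeroQp p)])]
  rw [map_one, ZMod.val_one, pow_one]
  norm_num

lemma stdChar_pinv_ne_one : stdChar p ((p : ℚ_[p]))⁻¹ ≠ 1 := by
  rw [stdChar, fract_pinv]
  intro h
  rw [Complex.exp_eq_one_iff] at h
  obtain ⟨n, hn⟩ := h
  have h2 : ((1 / p : ℚ) : ℂ) = (n : ℂ) := by
    have hne : (2 * (Real.pi : ℂ) * Complex.I) ≠ 0 := by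
      simp [Real.pi_ne_zero, Complex.I_ne_zero]
    have hn' : ((1 / p : ℚ) : ℂ) * (2 * (Real.pi : ℂ) * Complex.I) =
        (n : ℂ) * (2 * (Real.pi : ℂ) * Complex.I) := by
      rw [← hn]; ring
    exact mul_right_cancel₀ hne hn' 
  have h3 : (1 / p : ℚ) = (n : ℚ) := by exact_mod_cast h2
  have h4 : (0 : ℚ) < 1 / p := by
    apply div_pos one_pos
    exact_mod_cast (Fact.out : p.Prime).pos
  have h5 : (1 / p : ℚ) < 1 := by
    rw [div_lt_one (by exact_mod_cast (Fact.out : p.Prime).pos)]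
    exact_mod_cast (Fact.out : p.Prime).one_lt
  rw [h3] at h4 h5
  have : (0 : ℤ) < n := by exact_mod_cast h4
  have : (n : ℚ) < 1 := h5
  have : n < 1 := by exact_mod_cast this
  omega

lemma stdChar_add_pinv (y : ℚ_[p]) (hy : (p : ℝ) ^ (2 : ℕ) ≤ ‖y‖) :
    stdChar p (y + (p : ℚ_[p])⁻¹) = stdChar p ((p : ℚ_[p]))⁻¹ * stdChar p y := by
  have hp1 : (1 : ℝ) < p := p_gt_oneR p
  have hp0 : (0 : ℝ) < p := p_posR p
  have hpQ : (0 : ℚ) < p := by exact_mod_cast (Fact.out : p.Prime).pos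
  have hy0 : y ≠ 0 := by
    intro h; rw [h, norm_zero] at hy; nlinarith
  -- valuation of y
  set v : ℤ := y.valuation with hv
  have hnormy0 : ‖y‖ = (p : ℝ) ^ (-v) := Padic.norm_eq_zpow_neg_valuation hy0
  have hv2 : v ≤ -2 := by
    have : (p : ℝ) ^ (2 : ℤ) ≤ (p : ℝ) ^ (-v) := by
      rw [← hnormy0]; exact_mod_cast hy
    have := (zpow_le_zpow_iff_right₀ hp1).mp this
    omega
  set m : ℕ := (-v).toNat with hm
  have hm2 : 2 ≤ m := by omega
  have hmv : (m : ℤ) = -v := by omega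
  -- the sum y' = y + p⁻¹
  set y' : ℚ_[p] := y + (p : ℚ_[p])⁻¹ with hy'
  have hnormne : ‖y‖ ≠ ‖((p : ℚ_[p]))⁻¹‖ := by
    rw [norm_pinv]
    intro h
    rw [h] at hy
    nlinarith
  have hnormy' : ‖y'‖ = ‖y‖ := by
    rw [hy', Padic.add_eq_max_of_ne hnormne, norm_pinv]
    rw [max_eq_left]
    nlinarith
  have hy'0 : y' ≠ 0 := by
    intro h
    rw [h, norm_zero] at hnormy'
    exact hy0 (norm_eq_zero.mp hnormy'.symm)
  have hvaly' : y'.valuation = v := by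
    have := val_of_norm p hy'0 (n := -v) (by rw [hnormy', hnormy0])
    omega
  -- not in unit ball
  have hyn : ¬ ‖y‖ ≤ 1 := by nlinarith
  have hy'n : ¬ ‖y'‖ ≤ 1 := by rw [hnormy']; exact hyn
  -- integer elements
  have hz1 : ‖(p : ℚ_[p]) ^ m * y‖ ≤ 1 := by
    rw [norm_mul, norm_pow, Padic.norm_p, hnormy0, inv_pow, ← zpow_natCast, ← zpow_neg,
      ← zpow_add₀ (ne_of_gt hp0)]
    rw [hmv]
    simp
  set z1 : ℤ_[p] := ⟨(p : ℚ_[p]) ^ m * y, hz1⟩ with hz1def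
  set z2 : ℤ_[p] := z1 + (p : ℤ_[p]) ^ (m - 1) with hz2def
  have hz2coe : (z2 : ℚ_[p]) = (p : ℚ_[p]) ^ m * y' := by
    push_cast [hz2def, hz1def, hy']
    rw [mul_add]
    congr 1
    have : (p : ℚ_[p]) ^ m = (p : ℚ_[p]) ^ (m - 1) * p := by
      rw [← pow_succ]
      congr 1
      omega
    change (p : ℚ_[p]) ^ m * y + (p : ℚ_[p]) ^ (m - 1) = _
    congr 1
    rw [this]
    rw [mul_assoc, mul_inv_cancel₀ (p_ne_zeroQp p), mul_one]
  -- fract values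
  set A := PadicInt.toZModPow (p := p) m z1 with hA
  have hfy : fract p y = (A.val : ℚ) / p ^ m := fract_eq p y hyn m hmv z1 rfl
  have hfy' : fract p y' = ((A + (p : ZMod (p ^ m)) ^ (m - 1)).val : ℚ) / p ^ m := by
    rw [fract_eq p y' hy'n m (by rw [hvaly']; exact hmv) z2 hz2coe]
    congr 2
    rw [hz2def, map_add, map_pow, map_natCast]
  -- the integer discrepancy
  haveI : NeZero (p ^ m) := ⟨pow_ne_zero m (Fact.out : p.Prime).ne_zero⟩
  set B : ZMod (p ^ m) := (p : ZMod (p ^ m)) ^ (m - 1) with hB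
  have hdvd : ((p ^ m : ℕ) : ℤ) ∣ (((A + B).val : ℤ) - (A.val : ℤ) - ((p ^ (m - 1) : ℕ) : ℤ)) := by
    rw [← ZMod.intCast_zmod_eq_zero_iff_dvd]
    push_cast [ZMod.natCast_zmod_val]
    rw [hB]
    push_cast
    ring
  obtain ⟨k, hk⟩ := hdvd
  have hfrac_eq : fract p y' = fract p ((p : ℚ_[p]))⁻¹ + fract p y + (k : ℚ) := by
    rw [hfy', hfy, fract_pinv]
    have hpm : (0 : ℚ) < (p : ℚ) ^ m := pow_pos hpQ m
    have hkQ : ((A + B).val : ℚ) = (A.val : ℚ) + (p : ℚ) ^ (m - 1) + (p : ℚ) ^ m * k := by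
      have := hk
      have h2 : ((A + B).val : ℚ) - (A.val : ℚ) - ((p ^ (m - 1) : ℕ) : ℚ) = ((p ^ m : ℕ) : ℚ) * k := by
        exact_mod_cast congrArg (fun z : ℤ => (z : ℚ)) this
      push_cast at h2
      linarith
    rw [hkQ]
    have hpm1 : (p : ℚ) ^ m = (p : ℚ) ^ (m - 1) * p := by
      rw [← pow_succ]
      congr 1
      omega
    field_simp
    rw [hpm1]
    ring
  -- conclude
  rw [stdChar, stdChar, stdChar, hfrac_eq]
  push_cast
  rw [mul_add, mul_add, Complex.exp_add, Complex.exp_add]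
  have : Complex.exp (2 * (Real.pi : ℂ) * Complex.I * (k : ℂ)) = 1 := by
    rw [show 2 * (Real.pi : ℂ) * Complex.I * (k : ℂ) = (k : ℂ) * (2 * Real.pi * Complex.I) by ring]
    exact Complex.exp_int_mul_two_pi_mul_I k
  rw [this, mul_one]

end AuxLemmas
/-- Verification of Hypothesis B for the Gibbs-type mutation measure: if
`p^{1-r₀} ≤ σ^{1/α}` for some negative integer `r₀`, `f(I₀) ≥ 1`, and
`N C₁ σ^{-1/α} 2^{-(1+α)} > μ_max`, then `Q̂₀(p^{1-r₀}) f(I₀) > μ_max`. -/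
theorem gibbs_hypothesis_B (p : ℕ) [Fact p.Prime] (σ α : ℝ)
    (hσ : 0 < σ) (hα : 0 < α) (C₁ : ℝ) (hC₁ : 0 < C₁)
    (hZ : ∀ ξ : ℚ_[p],
      C₁ * σ / (‖ξ‖ + σ ^ (1 / α)) ^ (1 + α) ≤ (heatK p σ α ξ).re)
    (M : ℕ) (hM : 1 ≤ M) (G : Finset ℚ_[p])
    (hGsub : ∀ I ∈ G, ‖I‖ ≤ 1)
    (hG : ∀ x : ℚ_[p], ‖x‖ ≤ 1 → ∃! I : ℚ_[p], I ∈ G ∧ ‖x - I‖ ≤ (p : ℝ) ^ (-(M : ℤ)))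
    (fc : ℚ_[p] → ℝ) (hfc : ∀ I ∈ G, 0 < fc I)
    -- `μ_max` is the maximum of the real parts of the eigenvalues of `W⁰` for the
    -- Gibbs-type mutation measure `Q₀ = N Ω e^{-σ|x|^α}`
    (μmax : ℝ)
    (hμ : IsGreatest
      {x : ℝ | ∃ z ∈ spectrum ℂ
        ((Wmat p
            (fun x => (∫ z in unitBall p, Real.exp (-σ * ‖z‖ ^ α) ∂(haar p))⁻¹ *
              ballIndR p 0 0 x * Real.exp (-σ * ‖x‖ ^ α))
            fc M G).map Complex.ofReal), z.re = x} μmax)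
    (r₀ : ℤ) (hr₀ : r₀ < 0)
    (hle : (p : ℝ) ^ ((1 : ℤ) - r₀) ≤ σ ^ (1 / α))
    (I₀ : {I : ℚ_[p] // I ∈ G}) (hI₀ : 1 ≤ fc I₀.1)
    (hcond : μmax <
      (∫ z in unitBall p, Real.exp (-σ * ‖z‖ ^ α) ∂(haar p))⁻¹ * C₁ * σ ^ (-(1 / α)) /
        2 ^ (1 + α)) :
    μmax <
      (fourierT p
        (fun x => (((∫ z in unitBall p, Real.exp (-σ * ‖z‖ ^ α) ∂(haar p))⁻¹ *
            ballIndR p 0 0 x * Real.exp (-σ * ‖x‖ ^ α) : ℝ) : ℂ))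
        ((p : ℚ_[p]) ^ (r₀ - 1))).re * fc I₀.1 := by

  clear hμ hG hGsub hfc hM
  have hp1 : (1 : ℝ) < p := p_gt_oneR p
  have hp0 : (0 : ℝ) < p := p_posR p
  set N : ℝ := (∫ z in unitBall p, Real.exp (-σ * ‖z‖ ^ α) ∂(haar p))⁻¹ with hN
  set ξ : ℚ_[p] := (p : ℚ_[p]) ^ (r₀ - 1) with hξ
  -- instances for the Haar measure
  haveI hreg : (haar p).Regular := by unfold haar; infer_instance
  haveI hinv : (haar p).IsAddLeftInvariant := by unfold haar; infer_instance
  -- norm of ξ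
  have hnξ : ‖ξ‖ = (p : ℝ) ^ (1 - r₀) := by
    rw [hξ, Padic.norm_p_zpow]
    congr 1
    ring
  -- measure of the unit ball
  have hball : (haar p) (unitBall p) = 1 := by
    rw [haar]
    exact Measure.addHaarMeasure_self
  -- measurability and continuity
  have hSmeas : MeasurableSet (unitBall p) :=
    (isClosed_le continuous_norm continuous_const).measurableSet
  have hcont : Continuous fun x : ℚ_[p] => Real.exp (-σ * ‖x‖ ^ α) := by
    apply Real.continuous_exp.comp
    apply Continuous.mul continuous_const
    apply continuous_iff_continuousAt.mpr
    intro x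
    exact (Real.continuousAt_rpow_const _ _ (Or.inr hα.le)).comp continuous_norm.continuousAt
  -- positivity of the normalizing integral
  have hIpos : 0 < ∫ z in unitBall p, Real.exp (-σ * ‖z‖ ^ α) ∂(haar p) := by
    have hInt : IntegrableOn (fun z : ℚ_[p] => Real.exp (-σ * ‖z‖ ^ α)) (unitBall p) (haar p) :=
      hcont.continuousOn.integrableOn_compact' (isCompact_unitBall p) hSmeas
    have hconst : IntegrableOn (fun _ : ℚ_[p] => Real.exp (-σ)) (unitBall p) (haar p) := by
      exact integrableOn_const (by rw [hball]; exact ENNReal.one_ne_top)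
    calc (0 : ℝ) < Real.exp (-σ) := Real.exp_pos _
      _ = ∫ _ in unitBall p, Real.exp (-σ) ∂(haar p) := by
          rw [setIntegral_const, Measure.real, hball]
          simp
      _ ≤ ∫ z in unitBall p, Real.exp (-σ * ‖z‖ ^ α) ∂(haar p) := by
          apply setIntegral_mono_on hconst hInt hSmeas
          intro z hz
          apply Real.exp_le_exp.mpr
          have h1 : ‖z‖ ^ α ≤ 1 := Real.rpow_le_one (norm_nonneg z) hz hα.le
          nlinarith
  have hNpos : 0 < N := inv_pos.mpr hIpos
  -- the heat-kernel integrand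
  set F : ℚ_[p] → ℂ :=
    fun x => stdChar p (ξ * x) * ((Real.exp (-σ * ‖x‖ ^ α) : ℝ) : ℂ) with hF
  have hheat : heatK p σ α ξ = ∫ x, F x ∂(haar p) := rfl
  have hσα : 0 < σ ^ (1 / α) := Real.rpow_pos_of_pos hσ _
  have hlbpos : 0 < C₁ * σ / (‖ξ‖ + σ ^ (1 / α)) ^ (1 + α) := by
    apply div_pos (by positivity)
    apply Real.rpow_pos_of_pos
    have : 0 ≤ ‖ξ‖ := norm_nonneg _
    linarith
  -- integrability of F
  have hFint : Integrable F (haar p) := by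
    by_contra hcon
    have h0 : heatK p σ α ξ = 0 := by rw [hheat, integral_undef hcon]
    have := hZ ξ
    rw [h0] at this
    simp only [Complex.zero_re] at this
    linarith
  -- the translation
  set t : ℚ_[p] := (p : ℚ_[p]) ^ (-r₀ : ℤ) with ht
  set c : ℂ := stdChar p ((p : ℚ_[p]))⁻¹ with hc
  set g : ℚ_[p] → ℂ := (unitBall p)ᶜ.indicator F with hg
  have hnt : ‖t‖ = (p : ℝ) ^ (r₀ : ℤ) := by
    rw [ht, Padic.norm_p_zpow]
    congr 1
    ring
  have hntlt : ‖t‖ < 1 := by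
    rw [hnt]
    apply zpow_lt_one_of_neg₀ hp1 (by omega)
  have hkey : ∀ x, g (x + t) = c * g x := by
    intro x
    by_cases hx : x ∈ (unitBall p)ᶜ
    · have hx1 : 1 < ‖x‖ := by
        simpa [unitBall] using hx
      have hnormne : ‖x‖ ≠ ‖t‖ := by intro h; rw [h] at hx1; linarith
      have hxt : ‖x + t‖ = ‖x‖ := by
        rw [Padic.add_eq_max_of_ne hnormne, max_eq_left (by linarith)]
      have hxt1 : x + t ∈ (unitBall p)ᶜ := by
        simp only [unitBall, Set.mem_compl_iff, Set.mem_setOf_eq, not_le, hxt]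
        exact hx1
      rw [hg, Set.indicator_of_mem hxt1, Set.indicator_of_mem hx, hF]
      simp only []
      rw [hxt]
      have harg : ξ * (x + t) = ξ * x + (p : ℚ_[p])⁻¹ := by
        rw [mul_add]
        congr 1
        rw [hξ, ht, ← zpow_add₀ (p_ne_zeroQp p)]
        rw [show r₀ - 1 + -r₀ = -1 by ring, zpow_neg_one]
      have hbound : (p : ℝ) ^ (2 : ℕ) ≤ ‖ξ * x‖ := by
        rw [norm_mul, hnξ]
        have h1 : (p : ℝ) ^ (2 : ℤ) ≤ (p : ℝ) ^ (1 - r₀) :=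
          zpow_le_zpow_right₀ hp1.le (by omega)
        have h2 : (p : ℝ) ^ (1 - r₀) ≤ (p : ℝ) ^ (1 - r₀) * ‖x‖ := by
          apply le_mul_of_one_le_right (by positivity) hx1.le
        have h3 : (p : ℝ) ^ (2 : ℕ) = (p : ℝ) ^ (2 : ℤ) := by
          rw [← zpow_natCast]
          norm_num
        rw [h3]
        linarith
      rw [harg, stdChar_add_pinv p (ξ * x) hbound, hc]
      ring
    · have hx1 : ‖x‖ ≤ 1 := by
        simpa [unitBall] using hx
      have hxt1 : x + t ∉ (unitBall p)ᶜ := by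
        simp only [unitBall, Set.mem_compl_iff, Set.mem_setOf_eq, not_le, not_lt]
        calc ‖x + t‖ ≤ max ‖x‖ ‖t‖ := Padic.nonarchimedean x t
          _ ≤ 1 := max_le hx1 hntlt.le
      rw [hg, Set.indicator_of_notMem hxt1, Set.indicator_of_notMem hx, mul_zero]
  -- the integral of g vanishes
  have hgzero : ∫ x, g x ∂(haar p) = 0 := by
    have h1 : ∫ x, g (x + t) ∂(haar p) = ∫ x, g x ∂(haar p) :=
      integral_add_right_eq_self g t
    have h2 : ∫ x, g (x + t) ∂(haar p) = c * ∫ x, g x ∂(haar p) := by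
      simp_rw [hkey]
      exact integral_const_mul c g
    have h3 : (c - 1) * ∫ x, g x ∂(haar p) = 0 := by
      rw [sub_mul, one_mul, ← h2, h1, sub_self]
    rcases mul_eq_zero.mp h3 with h | h
    · rw [hc] at h
      exact absurd (sub_eq_zero.mp h) (stdChar_pinv_ne_one p)
    · exact h
  -- split the heat kernel integral
  have hsplit : ∫ x, F x ∂(haar p) = ∫ x, (unitBall p).indicator F x ∂(haar p) := by
    have hdecomp : ∀ x, F x = (unitBall p).indicator F x + g x := by
      intro x
      rw [hg]
      by_cases hx : x ∈ unitBall p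
      · rw [Set.indicator_of_mem hx, Set.indicator_of_notMem (by simpa using hx), add_zero]
      · rw [Set.indicator_of_notMem hx, Set.indicator_of_mem (by simpa using hx), zero_add]
    calc ∫ x, F x ∂(haar p) = ∫ x, ((unitBall p).indicator F x + g x) ∂(haar p) := by
          simp_rw [← hdecomp]
      _ = (∫ x, (unitBall p).indicator F x ∂(haar p)) + ∫ x, g x ∂(haar p) :=
          integral_add (hFint.indicator hSmeas) (hFint.indicator hSmeas.compl)
      _ = ∫ x, (unitBall p).indicator F x ∂(haar p) := by rw [hgzero, add_zero]
  -- the Fourier transform equals N times the heat kernel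
  have hfour :
      fourierT p
        (fun x => (((N * ballIndR p 0 0 x * Real.exp (-σ * ‖x‖ ^ α) : ℝ)) : ℂ)) ξ
        = (N : ℂ) * heatK p σ α ξ := by
    rw [fourierT]
    have hpt : ∀ x : ℚ_[p],
        stdChar p (ξ * x) * (((N * ballIndR p 0 0 x * Real.exp (-σ * ‖x‖ ^ α) : ℝ)) : ℂ)
          = (N : ℂ) * (unitBall p).indicator F x := by
      intro x
      rw [ballIndR]
      by_cases hx : ‖x‖ ≤ 1
      · rw [if_pos (by simpa using hx),
          Set.indicator_of_mem (show x ∈ unitBall p from hx)]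
        simp only [hF]
        push_cast
        ring
      · rw [if_neg (by simpa using hx),
          Set.indicator_of_notMem (show x ∉ unitBall p from hx)]
        push_cast
        ring
    simp_rw [hpt]
    rw [integral_const_mul, hheat, hsplit]
  rw [hfour]
  -- the quantitative lower bound
  have hnorm_le : ‖ξ‖ ≤ σ ^ (1 / α) := by
    rw [hnξ]
    exact hle
  have hZξ := hZ ξ
  have hchain : C₁ * σ ^ (-(1 / α)) / 2 ^ (1 + α) ≤ (heatK p σ α ξ).re := by
    have h2 : C₁ * σ / (2 * σ ^ (1 / α)) ^ (1 + α)
        ≤ C₁ * σ / (‖ξ‖ + σ ^ (1 / α)) ^ (1 + α) := by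
      apply div_le_div_of_nonneg_left (by positivity)
      · apply Real.rpow_pos_of_pos
        have : 0 ≤ ‖ξ‖ := norm_nonneg _
        linarith
      · apply Real.rpow_le_rpow (by positivity) (by linarith) (by linarith)
    have h3 : C₁ * σ / (2 * σ ^ (1 / α)) ^ (1 + α) = C₁ * σ ^ (-(1 / α)) / 2 ^ (1 + α) := by
      have e1 : (2 * σ ^ (1 / α)) ^ (1 + α) = 2 ^ (1 + α) * (σ ^ (1 / α) * σ) := by
        rw [Real.mul_rpow (by norm_num) hσα.le]
        congr 1
        rw [← Real.rpow_mul hσ.le]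
        rw [show 1 / α * (1 + α) = 1 / α + 1 by
          rw [mul_add, mul_one, one_div_mul_cancel hα.ne']]
        rw [Real.rpow_add hσ, Real.rpow_one]
      rw [e1, Real.rpow_neg hσ.le]
      have h2pos : (0 : ℝ) < (2 : ℝ) ^ (1 + α) := Real.rpow_pos_of_pos (by norm_num) _
      field_simp
    calc C₁ * σ ^ (-(1 / α)) / 2 ^ (1 + α) = C₁ * σ / (2 * σ ^ (1 / α)) ^ (1 + α) := h3.symm
      _ ≤ C₁ * σ / (‖ξ‖ + σ ^ (1 / α)) ^ (1 + α) := h2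
      _ ≤ (heatK p σ α ξ).re := hZξ
  -- conclude
  have hre : ((N : ℂ) * heatK p σ α ξ).re = N * (heatK p σ α ξ).re := by
    rw [Complex.re_ofReal_mul]
  rw [hre]
  have hBpos : 0 < N * C₁ * σ ^ (-(1 / α)) / 2 ^ (1 + α) := by
    have h2pos : (0 : ℝ) < (2 : ℝ) ^ (1 + α) := Real.rpow_pos_of_pos (by norm_num) _
    have hs : (0 : ℝ) < σ ^ (-(1 / α)) := Real.rpow_pos_of_pos hσ _
    positivity
  have hmain : N * C₁ * σ ^ (-(1 / α)) / 2 ^ (1 + α) ≤ N * (heatK p σ α ξ).re := by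
    have := mul_le_mul_of_nonneg_left hchain hNpos.le
    calc N * C₁ * σ ^ (-(1 / α)) / 2 ^ (1 + α)
        = N * (C₁ * σ ^ (-(1 / α)) / 2 ^ (1 + α)) := by ring
      _ ≤ N * (heatK p σ α ξ).re := this
  have hpos2 : 0 < N * (heatK p σ α ξ).re := lt_of_lt_of_le hBpos hmain
  calc μmax < N * C₁ * σ ^ (-(1 / α)) / 2 ^ (1 + α) := hcond
    _ ≤ N * (heatK p σ α ξ).re := hmain
    _ ≤ N * (heatK p σ α ξ).re * fc I₀.1 := le_mul_of_one_le_right hpos2.le hI₀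


end PadicES
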